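/- Let σ > 0, t > 0, x ≥ 0, and f : [0,∞) → ℂ be continuously differentiable with f, f' of polynomial growth. With u(t,x) := ∫_ℝ f((√x + σ√t y)²) (2π)^{-1/2} e^{−y²/2} dy, one has ∂u/∂t (t,x) = (2t)^{-1} ∫_ℝ (y² − 1) f((√x + σ√t y)²) (2π)^{-1/2} e^{−y²/2} dy. -/

import Mathlib

open MeasureTheory

noncomputable def gaussDensity (y : ℝ) : ℝ :=
  (Real.sqrt (2 * Real.pi))⁻¹ * Real.exp (-(y ^ 2) / 2)

noncomputable def cirU (σ : ℝ) (f : ℝ → ℂ) (t x : ℝ) : ℂ :=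
  ∫ y : ℝ, gaussDensity y • f ((Real.sqrt x + σ * Real.sqrt t * y) ^ 2)

lemma gaussDensity_nonneg (y : ℝ) : 0 ≤ gaussDensity y := by
  unfold gaussDensity; positivity

lemma continuous_gaussDensity : Continuous gaussDensity := by
  unfold gaussDensity; fun_prop

lemma integrable_poly_mul_gauss (q : ℕ) :
    Integrable (fun y : ℝ => (1 + |y|) ^ q * gaussDensity y) := by
  have base : ∀ k : ℕ, Integrable (fun y : ℝ => |y| ^ k * Real.exp (-(y ^ 2) / 2)) := by
    intro k
    have h1 : Integrable (fun y : ℝ => y ^ k * Real.exp (-(y ^ 2) / 2)) := by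
      have h := integrable_rpow_mul_exp_neg_mul_sq (b := 1/2) (by norm_num) (s := (k : ℝ))
        (lt_of_lt_of_le neg_one_lt_zero (Nat.cast_nonneg k))
      convert h using 2 with y
      rw [Real.rpow_natCast]
      ring_nf
    simpa [abs_mul, abs_pow, Real.abs_exp] using h1.abs
  have : ∀ y : ℝ, (1 + |y|) ^ q * gaussDensity y =
      ∑ k ∈ Finset.range (q + 1),
        ((Real.sqrt (2 * Real.pi))⁻¹ * (q.choose k)) *
          (|y| ^ (q - k) * Real.exp (-(y ^ 2) / 2)) := by
    intro y
    rw [add_pow]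
    unfold gaussDensity
    rw [Finset.sum_mul]
    congr 1 with k
    ring
  rw [show (fun y : ℝ => (1 + |y|) ^ q * gaussDensity y) = _ from funext this]
  exact integrable_finset_sum _ fun k _ => (base (q - k)).const_mul _

lemma integrable_of_le_poly_gauss {φ : ℝ → ℂ} (hc : Continuous φ) {K : ℝ} {q : ℕ}
    (hb : ∀ y, ‖φ y‖ ≤ K * ((1 + |y|) ^ q * gaussDensity y)) : Integrable φ :=
  Integrable.mono' ((integrable_poly_mul_gauss q).const_mul K)
    hc.aestronglyMeasurable (ae_of_all _ hb)

lemma hasDerivAt_gaussDensity (y : ℝ) :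
    HasDerivAt gaussDensity (-y * gaussDensity y) y := by
  have h : HasDerivAt (fun y : ℝ => -(y ^ 2) / 2) (-(2 * y ^ 1) / 2) y :=
    (hasDerivAt_pow 2 y).neg.div_const 2
  have h2 := (h.exp).const_mul (Real.sqrt (2 * Real.pi))⁻¹
  refine h2.congr_deriv ?_
  unfold gaussDensity
  ring

lemma gauss_ibp (g g' : ℝ → ℂ) (hd : ∀ y, HasDerivAt g (g' y) y)
    (h1 : Integrable (fun y => (gaussDensity y * y) • g y))
    (h2 : Integrable (fun y => (gaussDensity y * y) • g' y))
    (h3 : Integrable (fun y => (gaussDensity y * (y ^ 2 - 1)) • g y)) :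
    ∫ y, (gaussDensity y * y) • g' y = ∫ y, (gaussDensity y * (y ^ 2 - 1)) • g y := by
  have hH : ∀ y : ℝ, HasDerivAt (fun y => (gaussDensity y * y) • g y)
      ((gaussDensity y * y) • g' y - (gaussDensity y * (y ^ 2 - 1)) • g y) y := by
    intro y
    have hGy : HasDerivAt (fun y : ℝ => gaussDensity y * y)
        ((-y * gaussDensity y) * y + gaussDensity y * 1) y :=
      (hasDerivAt_gaussDensity y).mul (hasDerivAt_id y)
    have := hGy.smul (hd y)
    refine this.congr_deriv ?_
    have e1 : (-y * gaussDensity y) * y + gaussDensity y * 1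
        = -(gaussDensity y * (y ^ 2 - 1)) := by ring
    rw [e1, neg_smul]
    abel
  have hzero := integral_eq_zero_of_hasDerivAt_of_integrable hH (h2.sub h3) h1
  rw [integral_sub h2 h3] at hzero
  exact sub_eq_zero.mp hzero

/-- time derivative of
`u(t,x) = ∫ f((√x + σ√t y)²) (2π)^{-1/2} e^{-y²/2} dy`:
`∂u/∂t = (2t)⁻¹ ∫ (y² − 1) f((√x + σ√t y)²) (2π)^{-1/2} e^{-y²/2} dy`. -/
theorem cirU_time_derivative
    (σ t x : ℝ) (hσ : 0 < σ) (ht : 0 < t) (hx : 0 ≤ x)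
    (f : ℝ → ℂ) (hf : ContDiff ℝ 1 f)
    (hgrowth : ∃ (C : ℝ) (p : ℕ), ∀ z : ℝ,
      ‖f z‖ ≤ C * (1 + |z|) ^ p ∧ ‖deriv f z‖ ≤ C * (1 + |z|) ^ p) :
    HasDerivAt (fun τ => cirU σ f τ x)
      (((2 * t)⁻¹ : ℝ) •
        ∫ y : ℝ, (gaussDensity y * (y ^ 2 - 1)) •
          f ((Real.sqrt x + σ * Real.sqrt t * y) ^ 2)) t := by
  obtain ⟨C, p, hCp⟩ := hgrowth
  have hC : 0 ≤ C := by
    have h := (hCp 0).1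
    have h0 : (0 : ℝ) ≤ C * (1 + |(0:ℝ)|) ^ p := le_trans (norm_nonneg _) h
    simpa using h0
  have hfc : Continuous f := hf.continuous
  have hf'c : Continuous (deriv f) := hf.continuous_deriv le_rfl
  have hfd : Differentiable ℝ f := hf.differentiable one_ne_zero
  set s := Real.sqrt x with hsdef
  have hs0 : 0 ≤ s := Real.sqrt_nonneg x
  set A : ℝ := s + σ * Real.sqrt (2 * t) + 1 with hAdef
  have hA1 : 1 ≤ A := by
    have : 0 ≤ σ * Real.sqrt (2 * t) := by positivity
    simp only [hAdef]; linarith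
  have hA0 : 0 < A := lt_of_lt_of_le one_pos hA1
  -- basic facts about τ in the ball
  have hball : ∀ τ ∈ Metric.ball t (t / 2), t / 2 < τ ∧ τ < 2 * t ∧ 0 < τ := by
    intro τ hτ
    rw [Metric.mem_ball, Real.dist_eq, abs_sub_lt_iff] at hτ
    exact ⟨by linarith [hτ.2], by linarith [hτ.1], by linarith [hτ.2]⟩
  -- bound on |s + σ √τ y|
  have hAb : ∀ τ ∈ Metric.ball t (t / 2), ∀ y : ℝ,
      |s + σ * Real.sqrt τ * y| ≤ A * (1 + |y|) := by
    intro τ hτ y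
    obtain ⟨h1, h2, h3⟩ := hball τ hτ
    have hsq : Real.sqrt τ ≤ Real.sqrt (2 * t) := Real.sqrt_le_sqrt (by linarith)
    have hsq0 : 0 ≤ Real.sqrt τ := Real.sqrt_nonneg τ
    calc |s + σ * Real.sqrt τ * y| ≤ |s| + |σ * Real.sqrt τ * y| := abs_add_le _ _
      _ = s + σ * Real.sqrt τ * |y| := by
          rw [abs_of_nonneg hs0, abs_mul, abs_mul, abs_of_nonneg hσ.le, abs_of_nonneg hsq0]
      _ ≤ A * (1 + |y|) := by
          have hy := abs_nonneg y
          have : σ * Real.sqrt τ * |y| ≤ σ * Real.sqrt (2 * t) * |y| := by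
            have := mul_le_mul_of_nonneg_left hsq hσ.le
            exact mul_le_mul_of_nonneg_right this hy
          simp only [hAdef]
          nlinarith [Real.sqrt_nonneg (2 * t)]
  -- bound on (1 + |inner|)^p
  have hDB : ∀ τ ∈ Metric.ball t (t / 2), ∀ y : ℝ,
      (1 + |(s + σ * Real.sqrt τ * y) ^ 2|) ^ p ≤ (1 + A ^ 2) ^ p * (1 + |y|) ^ (2 * p) := by
    intro τ hτ y
    have h1 := hAb τ hτ y
    have habs : |(s + σ * Real.sqrt τ * y) ^ 2| = |s + σ * Real.sqrt τ * y| ^ 2 := by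
      rw [abs_pow]
    have hsq : |s + σ * Real.sqrt τ * y| ^ 2 ≤ (A * (1 + |y|)) ^ 2 :=
      pow_le_pow_left₀ (abs_nonneg _) h1 2
    calc (1 + |(s + σ * Real.sqrt τ * y) ^ 2|) ^ p
        ≤ ((1 + A ^ 2) * (1 + |y|) ^ 2) ^ p := by
          apply pow_le_pow_left₀ (by positivity)
          rw [habs]
          nlinarith [sq_nonneg (1 + |y|), abs_nonneg y, sq_nonneg A]
      _ = (1 + A ^ 2) ^ p * (1 + |y|) ^ (2 * p) := by rw [mul_pow, ← pow_mul]
  -- bounds on f, deriv f along the inner map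
  have hfB : ∀ τ ∈ Metric.ball t (t / 2), ∀ y : ℝ,
      ‖f ((s + σ * Real.sqrt τ * y) ^ 2)‖ ≤ (C * (1 + A ^ 2) ^ p) * (1 + |y|) ^ (2 * p) := by
    intro τ hτ y
    calc ‖f ((s + σ * Real.sqrt τ * y) ^ 2)‖
        ≤ C * (1 + |(s + σ * Real.sqrt τ * y) ^ 2|) ^ p := (hCp _).1
      _ ≤ C * ((1 + A ^ 2) ^ p * (1 + |y|) ^ (2 * p)) :=
          mul_le_mul_of_nonneg_left (hDB τ hτ y) hC
      _ = (C * (1 + A ^ 2) ^ p) * (1 + |y|) ^ (2 * p) := by ring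
  have hf'B : ∀ τ ∈ Metric.ball t (t / 2), ∀ y : ℝ,
      ‖deriv f ((s + σ * Real.sqrt τ * y) ^ 2)‖ ≤ (C * (1 + A ^ 2) ^ p) * (1 + |y|) ^ (2 * p) := by
    intro τ hτ y
    calc ‖deriv f ((s + σ * Real.sqrt τ * y) ^ 2)‖
        ≤ C * (1 + |(s + σ * Real.sqrt τ * y) ^ 2|) ^ p := (hCp _).2
      _ ≤ C * ((1 + A ^ 2) ^ p * (1 + |y|) ^ (2 * p)) :=
          mul_le_mul_of_nonneg_left (hDB τ hτ y) hC
      _ = (C * (1 + A ^ 2) ^ p) * (1 + |y|) ^ (2 * p) := by ring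
  have htb : t ∈ Metric.ball t (t / 2) := Metric.mem_ball_self (by positivity)
  have hic : ∀ c : ℝ, Continuous fun y : ℝ => (s + c * y) ^ 2 := by
    intro c; fun_prop
  have hcont1 : ∀ τ : ℝ, Continuous fun y : ℝ =>
      gaussDensity y • f ((s + σ * Real.sqrt τ * y) ^ 2) := fun τ =>
    continuous_gaussDensity.smul (hfc.comp (hic (σ * Real.sqrt τ)))
  -- differentiation under the integral sign
  set F : ℝ → ℝ → ℂ := fun τ y => gaussDensity y • f ((s + σ * Real.sqrt τ * y) ^ 2) with hF
  set F' : ℝ → ℝ → ℂ := fun τ y => gaussDensity y •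
      ((((s + σ * Real.sqrt τ * y) * σ * y / Real.sqrt τ) : ℝ) •
        deriv f ((s + σ * Real.sqrt τ * y) ^ 2)) with hF'
  set K : ℝ := A * σ / Real.sqrt (t / 2) * (C * (1 + A ^ 2) ^ p) with hK
  have hst2 : 0 < Real.sqrt (t / 2) := Real.sqrt_pos.mpr (by positivity)
  have key : HasDerivAt (fun τ => ∫ y : ℝ, F τ y) (∫ y : ℝ, F' t y) t := by
    refine (hasDerivAt_integral_of_dominated_loc_of_deriv_le (F := F) (F' := F')
      (bound := fun y => K * ((1 + |y|) ^ (2 * p + 2) * gaussDensity y))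
      (Metric.ball_mem_nhds t (show (0:ℝ) < t / 2 by positivity)) ?_ ?_ ?_ ?_ ?_ ?_).2
    · filter_upwards with τ
      exact (hcont1 τ).aestronglyMeasurable
    · refine integrable_of_le_poly_gauss (K := C * (1 + A ^ 2) ^ p) (q := 2 * p) ?_ ?_
      · exact hcont1 t
      · intro y
        rw [norm_smul, Real.norm_eq_abs, abs_of_nonneg (gaussDensity_nonneg y)]
        calc gaussDensity y * ‖f ((s + σ * Real.sqrt t * y) ^ 2)‖
            ≤ gaussDensity y * ((C * (1 + A ^ 2) ^ p) * (1 + |y|) ^ (2 * p)) :=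
              mul_le_mul_of_nonneg_left (hfB t htb y) (gaussDensity_nonneg y)
          _ = C * (1 + A ^ 2) ^ p * ((1 + |y|) ^ (2 * p) * gaussDensity y) := by ring
    · apply Continuous.aestronglyMeasurable
      apply continuous_gaussDensity.smul
      exact Continuous.smul
        (by fun_prop : Continuous fun y : ℝ => (s + σ * Real.sqrt t * y) * σ * y / Real.sqrt t)
        (hf'c.comp (hic (σ * Real.sqrt t)))
    · filter_upwards with y τ hτ
      obtain ⟨hb1, hb2, hb3⟩ := hball τ hτ
      have hsqτ : 0 < Real.sqrt τ := Real.sqrt_pos.mpr hb3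
      have hsqle : Real.sqrt (t / 2) ≤ Real.sqrt τ := Real.sqrt_le_sqrt hb1.le
      simp only [hF', norm_smul, Real.norm_eq_abs, abs_of_nonneg (gaussDensity_nonneg y)]
      have hr : |(s + σ * Real.sqrt τ * y) * σ * y / Real.sqrt τ|
          ≤ A * (1 + |y|) * σ * (1 + |y|) / Real.sqrt (t / 2) := by
        rw [abs_div, abs_mul, abs_mul, abs_of_nonneg hσ.le,
          abs_of_nonneg (Real.sqrt_nonneg τ)]
        apply div_le_div₀ (by positivity) _ hst2 hsqle
        have := hAb τ hτ y
        have hy : |y| ≤ 1 + |y| := le_add_of_nonneg_left zero_le_one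
        have h1 : |s + σ * Real.sqrt τ * y| * σ ≤ A * (1 + |y|) * σ :=
          mul_le_mul_of_nonneg_right this hσ.le
        calc |s + σ * Real.sqrt τ * y| * σ * |y| ≤ A * (1 + |y|) * σ * |y| :=
              mul_le_mul_of_nonneg_right h1 (abs_nonneg y)
          _ ≤ A * (1 + |y|) * σ * (1 + |y|) :=
              mul_le_mul_of_nonneg_left hy (by positivity)
      calc gaussDensity y * (|(s + σ * Real.sqrt τ * y) * σ * y / Real.sqrt τ| *
              ‖deriv f ((s + σ * Real.sqrt τ * y) ^ 2)‖)
          ≤ gaussDensity y * ((A * (1 + |y|) * σ * (1 + |y|) / Real.sqrt (t / 2)) *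
              ((C * (1 + A ^ 2) ^ p) * (1 + |y|) ^ (2 * p))) := by
            apply mul_le_mul_of_nonneg_left _ (gaussDensity_nonneg y)
            apply mul_le_mul hr (hf'B τ hτ y) (norm_nonneg _) (by positivity)
        _ = K * ((1 + |y|) ^ (2 * p + 2) * gaussDensity y) := by
            simp only [hK]
            field_simp
            ring
    · apply Integrable.const_mul
      exact integrable_poly_mul_gauss (2 * p + 2)
    · filter_upwards with y τ hτ
      obtain ⟨hb1, hb2, hb3⟩ := hball τ hτ
      have hsqτ : 0 < Real.sqrt τ := Real.sqrt_pos.mpr hb3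
      have hsq : HasDerivAt Real.sqrt (1 / (2 * Real.sqrt τ)) τ :=
        Real.hasDerivAt_sqrt (ne_of_gt hb3)
      have hinner : HasDerivAt (fun τ => (s + σ * Real.sqrt τ * y) ^ 2)
          (2 * (s + σ * Real.sqrt τ * y) ^ 1 * (σ * (1 / (2 * Real.sqrt τ)) * y)) τ :=
        (((hsq.const_mul σ).mul_const y).const_add s).pow 2
      have hcomp := (HasDerivAt.scomp (x := τ)
        (hfd ((s + σ * Real.sqrt τ * y) ^ 2)).hasDerivAt hinner).const_smul (gaussDensity y)
      refine hcomp.congr_deriv ?_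
      simp only [hF', Function.comp_def]
      congr 2
      field_simp
  -- now rewrite the derivative via integration by parts
  set g : ℝ → ℂ := fun y => f ((s + σ * Real.sqrt t * y) ^ 2) with hg
  set g' : ℝ → ℂ := fun y => ((2 * σ * Real.sqrt t * (s + σ * Real.sqrt t * y)) : ℝ) •
      deriv f ((s + σ * Real.sqrt t * y) ^ 2) with hg'
  have hsqt : 0 < Real.sqrt t := Real.sqrt_pos.mpr ht
  have hstt : Real.sqrt t * Real.sqrt t = t := Real.mul_self_sqrt ht.le
  have hgd : ∀ y : ℝ, HasDerivAt g (g' y) y := by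
    intro y
    have hinner : HasDerivAt (fun y : ℝ => (s + σ * Real.sqrt t * y) ^ 2)
        (2 * (s + σ * Real.sqrt t * y) ^ 1 * (σ * Real.sqrt t)) y := by
      have h0 : HasDerivAt (fun y : ℝ => s + σ * Real.sqrt t * y) (σ * Real.sqrt t) y := by
        simpa using ((hasDerivAt_id y).const_mul (σ * Real.sqrt t)).const_add s
      exact h0.pow 2
    have hcomp := HasDerivAt.scomp (x := y)
      (hfd ((s + σ * Real.sqrt t * y) ^ 2)).hasDerivAt hinner
    refine hcomp.congr_deriv ?_
    simp only [hg', Function.comp_def]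
    congr 1
    ring
  have hsqtle : Real.sqrt t ≤ Real.sqrt (2 * t) := Real.sqrt_le_sqrt (by linarith)
  have h1 : Integrable (fun y => (gaussDensity y * y) • g y) := by
    refine integrable_of_le_poly_gauss (K := C * (1 + A ^ 2) ^ p) (q := 2 * p + 1) ?_ ?_
    · exact (continuous_gaussDensity.mul continuous_id).smul
        (hfc.comp (hic (σ * Real.sqrt t)))
    · intro y
      rw [norm_smul, Real.norm_eq_abs, abs_mul, abs_of_nonneg (gaussDensity_nonneg y)]
      calc gaussDensity y * |y| * ‖g y‖
          ≤ gaussDensity y * (1 + |y|) * ((C * (1 + A ^ 2) ^ p) * (1 + |y|) ^ (2 * p)) := by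
            apply mul_le_mul _ (hfB t htb y) (norm_nonneg _)
              (mul_nonneg (gaussDensity_nonneg y) (by positivity))
            apply mul_le_mul_of_nonneg_left _ (gaussDensity_nonneg y)
            linarith [abs_nonneg y]
        _ = C * (1 + A ^ 2) ^ p * ((1 + |y|) ^ (2 * p + 1) * gaussDensity y) := by ring
  have h2 : Integrable (fun y => (gaussDensity y * y) • g' y) := by
    refine integrable_of_le_poly_gauss
      (K := 2 * σ * Real.sqrt (2 * t) * A * (C * (1 + A ^ 2) ^ p)) (q := 2 * p + 2) ?_ ?_
    · apply (continuous_gaussDensity.mul continuous_id).smul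
      exact Continuous.smul
        (by fun_prop : Continuous fun y : ℝ => 2 * σ * Real.sqrt t * (s + σ * Real.sqrt t * y))
        (hf'c.comp (hic (σ * Real.sqrt t)))
    · intro y
      rw [norm_smul, Real.norm_eq_abs, abs_mul, abs_of_nonneg (gaussDensity_nonneg y)]
      have hr : ‖g' y‖ ≤ (2 * σ * Real.sqrt (2 * t) * (A * (1 + |y|))) *
          ((C * (1 + A ^ 2) ^ p) * (1 + |y|) ^ (2 * p)) := by
        simp only [hg', norm_smul, Real.norm_eq_abs]
        apply mul_le_mul _ (hf'B t htb y) (norm_nonneg _) (by positivity)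
        rw [abs_mul, abs_mul, abs_mul, abs_of_nonneg hσ.le,
          abs_of_nonneg (Real.sqrt_nonneg t), abs_of_nonneg (by norm_num : (0:ℝ) ≤ 2)]
        have h1 : (2 : ℝ) * σ * Real.sqrt t ≤ 2 * σ * Real.sqrt (2 * t) := by
          have := mul_le_mul_of_nonneg_left hsqtle (by positivity : (0:ℝ) ≤ 2 * σ)
          linarith
        exact mul_le_mul h1 (hAb t htb y) (abs_nonneg _) (by positivity)
      calc gaussDensity y * |y| * ‖g' y‖
          ≤ gaussDensity y * (1 + |y|) * ((2 * σ * Real.sqrt (2 * t) * (A * (1 + |y|))) *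
              ((C * (1 + A ^ 2) ^ p) * (1 + |y|) ^ (2 * p))) := by
            apply mul_le_mul _ hr (norm_nonneg _)
              (mul_nonneg (gaussDensity_nonneg y) (by positivity))
            apply mul_le_mul_of_nonneg_left _ (gaussDensity_nonneg y)
            linarith [abs_nonneg y]
        _ = 2 * σ * Real.sqrt (2 * t) * A * (C * (1 + A ^ 2) ^ p) *
              ((1 + |y|) ^ (2 * p + 2) * gaussDensity y) := by ring
  have h3 : Integrable (fun y => (gaussDensity y * (y ^ 2 - 1)) • g y) := by
    refine integrable_of_le_poly_gauss (K := C * (1 + A ^ 2) ^ p) (q := 2 * p + 2) ?_ ?_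
    · exact (continuous_gaussDensity.mul (by fun_prop : Continuous fun y : ℝ => y ^ 2 - 1)).smul
        (hfc.comp (hic (σ * Real.sqrt t)))
    · intro y
      rw [norm_smul, Real.norm_eq_abs, abs_mul, abs_of_nonneg (gaussDensity_nonneg y)]
      have hy2 : |y ^ 2 - 1| ≤ (1 + |y|) ^ 2 := by
        rw [abs_sub_le_iff]
        constructor <;> nlinarith [abs_nonneg y, sq_abs y, neg_abs_le y, le_abs_self y]
      calc gaussDensity y * |y ^ 2 - 1| * ‖g y‖
          ≤ gaussDensity y * (1 + |y|) ^ 2 * ((C * (1 + A ^ 2) ^ p) * (1 + |y|) ^ (2 * p)) := by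
            apply mul_le_mul _ (hfB t htb y) (norm_nonneg _)
              (mul_nonneg (gaussDensity_nonneg y) (by positivity))
            exact mul_le_mul_of_nonneg_left hy2 (gaussDensity_nonneg y)
        _ = C * (1 + A ^ 2) ^ p * ((1 + |y|) ^ (2 * p + 2) * gaussDensity y) := by ring
  have hibp := gauss_ibp g g' hgd h1 h2 h3
  -- identify F' t with (2t)⁻¹ • ((gauss * y) • g')
  have hFg : ∀ y : ℝ, F' t y = ((2 * t)⁻¹ : ℝ) • ((gaussDensity y * y) • g' y) := by
    intro y
    simp only [hF', hg', smul_smul]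
    congr 1
    field_simp
    ring_nf
    rw [show Real.sqrt t ^ 3 = Real.sqrt t ^ 2 * Real.sqrt t by ring, Real.sq_sqrt ht.le]
    ring
  have hInt : (∫ y : ℝ, F' t y) = ((2 * t)⁻¹ : ℝ) •
      ∫ y : ℝ, (gaussDensity y * (y ^ 2 - 1)) • g y := by
    rw [show (fun y : ℝ => F' t y) = fun y => ((2 * t)⁻¹ : ℝ) • ((gaussDensity y * y) • g' y)
      from funext hFg, integral_smul, hibp]
  rw [show (fun τ => cirU σ f τ x) = fun τ => ∫ y : ℝ, F τ y from rfl]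
  rw [← hInt] at *
  exact hInt ▸ key
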